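/- Suppose n = k² and m = lk for some 0 ≤ l < k. Then every m×n Sudoku rectangle can be completed to an n×n Sudoku square. -/

import Mathlib

/-- `S` (restricted to rows and columns below k²) is a Sudoku square of order
n = k²: entries in {1,…,k²}, and each symbol occurs at most once (hence, the
square being full, exactly once) in each row, each column, and each aligned
k×k block. -/
def IsSudokuSquare (k : ℕ) (S : ℕ → ℕ → ℕ) : Prop :=
  (∀ i < k ^ 2, ∀ j < k ^ 2, S i j ∈ Finset.Icc 1 (k ^ 2)) ∧
  (∀ i < k ^ 2, ∀ j₁ < k ^ 2, ∀ j₂ < k ^ 2, S i j₁ = S i j₂ → j₁ = j₂) ∧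
  (∀ j < k ^ 2, ∀ i₁ < k ^ 2, ∀ i₂ < k ^ 2, S i₁ j = S i₂ j → i₁ = i₂) ∧
  (∀ bi < k, ∀ bj < k, ∀ x₁ < k, ∀ y₁ < k, ∀ x₂ < k, ∀ y₂ < k,
    S (bi * k + x₁) (bj * k + y₁) = S (bi * k + x₂) (bj * k + y₂) → x₁ = x₂ ∧ y₁ = y₂)

/-- `R` (restricted to its first m rows, all columns below k²) is an m×n
Sudoku rectangle for n = k²: the first m rows are filled with entries from
{1,…,k²} satisfying the row, column and block conditions. -/
def IsSudokuRect (k m : ℕ) (R : ℕ → ℕ → ℕ) : Prop :=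
  (∀ i < m, ∀ j < k ^ 2, R i j ∈ Finset.Icc 1 (k ^ 2)) ∧
  (∀ i < m, ∀ j₁ < k ^ 2, ∀ j₂ < k ^ 2, R i j₁ = R i j₂ → j₁ = j₂) ∧
  (∀ j < k ^ 2, ∀ i₁ < m, ∀ i₂ < m, R i₁ j = R i₂ j → i₁ = i₂) ∧
  (∀ bi, ∀ bj < k, ∀ x₁ < k, ∀ y₁ < k, ∀ x₂ < k, ∀ y₂ < k,
    bi * k + x₁ < m → bi * k + x₂ < m →
    R (bi * k + x₁) (bj * k + y₁) = R (bi * k + x₂) (bj * k + y₂) → x₁ = x₂ ∧ y₁ = y₂)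

/-- The Sudoku square `S` is a completion of the m×n Sudoku rectangle `R`. -/
def CompletesTo (k m : ℕ) (R S : ℕ → ℕ → ℕ) : Prop :=
  IsSudokuSquare k S ∧ ∀ i < m, ∀ j < k ^ 2, S i j = R i j



open Finset

/-- Double counting edges of a bipartite graph. -/
lemma sudoku_sum_card_inter {α β : Type*} [DecidableEq α] [DecidableEq β]
    (s : Finset α) (N : α → Finset β) (U : Finset β) (hU : ∀ a ∈ s, N a ⊆ U) :
    ∑ a ∈ s, (N a).card = ∑ b ∈ U, (s.filter (fun a => b ∈ N a)).card := by
  have h1 : ∀ a ∈ s, (N a).card = (U.filter (fun b => b ∈ N a)).card := by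
    intro a ha
    congr 1
    ext b
    simp only [mem_filter]
    exact ⟨fun hb => ⟨hU a ha hb, hb⟩, fun hb => hb.2⟩
  calc ∑ a ∈ s, (N a).card = ∑ a ∈ s, (U.filter (fun b => b ∈ N a)).card :=
        Finset.sum_congr rfl h1
    _ = ∑ a ∈ s, ∑ b ∈ U, if b ∈ N a then 1 else 0 := by
        refine Finset.sum_congr rfl fun a _ => ?_
        rw [Finset.card_filter]
    _ = ∑ b ∈ U, ∑ a ∈ s, if b ∈ N a then 1 else 0 := Finset.sum_comm
    _ = ∑ b ∈ U, (s.filter (fun a => b ∈ N a)).card := by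
        refine Finset.sum_congr rfl fun b _ => ?_
        rw [Finset.card_filter]

/-- Hall matching in a bipartite graph which is `d`-regular on the left and has
degrees at most `d` on the right. -/
lemma sudoku_reg_matching {α β : Type*} [DecidableEq α] [DecidableEq β] [Inhabited β]
    (A : Finset α) (B : Finset β) (N : α → Finset β) (d : ℕ) (hd : 0 < d)
    (hNB : ∀ a ∈ A, N a ⊆ B)
    (hA : ∀ a ∈ A, (N a).card = d)
    (hB : ∀ b ∈ B, (A.filter (fun a => b ∈ N a)).card ≤ d) :
    ∃ f : α → β, Set.InjOn f A ∧ ∀ a ∈ A, f a ∈ N a := by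
  classical
  set t : {x // x ∈ A} → Finset β := fun a => N a.1 with ht
  have hall : ∀ s : Finset {x // x ∈ A}, s.card ≤ (s.biUnion t).card := by
    intro s
    set U := s.biUnion t with hUdef
    have hU : ∀ a ∈ s, t a ⊆ U := fun a ha => Finset.subset_biUnion_of_mem t ha
    have key : d * s.card ≤ d * U.card := by
      have e1 : ∑ a ∈ s, (t a).card = ∑ b ∈ U, (s.filter (fun a => b ∈ t a)).card :=
        sudoku_sum_card_inter s t U hU
      have e2 : ∑ a ∈ s, (t a).card = d * s.card := by
        rw [Finset.sum_congr rfl (fun a _ => hA a.1 a.2), Finset.sum_const, smul_eq_mul,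
          Nat.mul_comm]
      have e3 : ∀ b ∈ U, (s.filter (fun a => b ∈ t a)).card ≤ d := by
        intro b hb
        obtain ⟨a0, ha0, hba0⟩ := Finset.mem_biUnion.mp hb
        have hbB : b ∈ B := hNB a0.1 a0.2 hba0
        calc (s.filter (fun a => b ∈ t a)).card
            ≤ (A.filter (fun a => b ∈ N a)).card := by
              apply Finset.card_le_card_of_injOn (fun a => a.1)
              · intro a ha
                simp only [coe_filter, mem_filter, Set.mem_setOf_eq, mem_coe] at ha ⊢
                exact ⟨a.2, ha.2⟩
              · intro x _ y _ hxy
                exact Subtype.ext hxy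
          _ ≤ d := hB b hbB
      calc d * s.card = ∑ a ∈ s, (t a).card := e2.symm
        _ = ∑ b ∈ U, (s.filter (fun a => b ∈ t a)).card := e1
        _ ≤ ∑ _b ∈ U, d := Finset.sum_le_sum e3
        _ = d * U.card := by rw [Finset.sum_const, smul_eq_mul, Nat.mul_comm]
    exact Nat.le_of_mul_le_mul_left key hd
  obtain ⟨g, hginj, hgmem⟩ := (Finset.all_card_le_biUnion_card_iff_exists_injective t).mp hall
  refine ⟨fun a => if h : a ∈ A then g ⟨a, h⟩ else default, ?_, ?_⟩
  · intro x hx y hy hxy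
    simp only [] at hxy
    rw [dif_pos (Finset.mem_coe.mp hx), dif_pos (Finset.mem_coe.mp hy)] at hxy
    exact congrArg Subtype.val (hginj hxy)
  · intro a ha
    simp only [dif_pos ha]
    exact hgmem ⟨a, ha⟩

/-- A `ℕ`-valued counting helper: if all terms are `≤ c` and the sum is maximal,
all terms equal `c`. -/
lemma sudoku_all_eq_of_sum {γ : Type*} (T : Finset γ) (g : γ → ℕ) (c : ℕ)
    (hle : ∀ x ∈ T, g x ≤ c) (hsum : ∑ x ∈ T, g x = c * T.card) :
    ∀ x ∈ T, g x = c := by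
  by_contra h
  push_neg at h
  obtain ⟨x0, hx0, hne⟩ := h
  have hlt : ∑ x ∈ T, g x < ∑ _x ∈ T, c := by
    apply Finset.sum_lt_sum hle ⟨x0, hx0, lt_of_le_of_ne (hle x0 hx0) hne⟩
  rw [Finset.sum_const, smul_eq_mul, Nat.mul_comm] at hlt
  omega

/-- Proper edge colouring of a `d`-regular bipartite graph with `d` colours
(König), phrased concretely. -/
lemma sudoku_reg_decompose {α β : Type*} [DecidableEq α] [DecidableEq β] [Inhabited β]
    (A : Finset α) (B : Finset β) (hcard : A.card = B.card) :
    ∀ (d : ℕ) (N : α → Finset β), (∀ a ∈ A, N a ⊆ B) → (∀ a ∈ A, (N a).card = d) →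
      (∀ b ∈ B, (A.filter (fun a => b ∈ N a)).card = d) →
      ∃ c : α → β → ℕ,
        (∀ a ∈ A, ∀ b ∈ N a, c a b < d) ∧
        (∀ a ∈ A, ∀ b₁ ∈ N a, ∀ b₂ ∈ N a, c a b₁ = c a b₂ → b₁ = b₂) ∧
        (∀ b ∈ B, ∀ a₁ ∈ A, ∀ a₂ ∈ A, b ∈ N a₁ → b ∈ N a₂ → c a₁ b = c a₂ b → a₁ = a₂) := by
  intro d
  induction d with
  | zero =>
    intro N _ hA _
    refine ⟨fun _ _ => 0, ?_, ?_, ?_⟩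
    · intro a ha b hb
      have := hA a ha
      rw [Finset.card_eq_zero] at this
      simp [this] at hb
    · intro a ha b₁ hb₁ b₂ hb₂ _
      have := hA a ha
      rw [Finset.card_eq_zero] at this
      simp [this] at hb₁
    · intro b _ a₁ ha₁ a₂ _ hb₁ _ _
      have := hA a₁ ha₁
      rw [Finset.card_eq_zero] at this
      simp [this] at hb₁
  | succ d ih =>
    intro N hNB hA hB
    obtain ⟨f, hfinj, hfmem⟩ := sudoku_reg_matching A B N (d + 1) (Nat.succ_pos d) hNB hA
      (fun b hb => le_of_eq (hB b hb))
    -- f is surjective from A onto B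
    have himg : A.image f = B := by
      apply Finset.eq_of_subset_of_card_le
      · intro b hb
        obtain ⟨a, ha, rfl⟩ := Finset.mem_image.mp hb
        exact hNB a ha (hfmem a ha)
      · rw [Finset.card_image_of_injOn hfinj]
        exact le_of_eq hcard.symm
    set N' : α → Finset β := fun a => (N a).erase (f a) with hN'
    have hN'B : ∀ a ∈ A, N' a ⊆ B := fun a ha =>
      (Finset.erase_subset _ _).trans (hNB a ha)
    have hN'A : ∀ a ∈ A, (N' a).card = d := by
      intro a ha
      rw [hN']
      rw [Finset.card_erase_of_mem (hfmem a ha), hA a ha]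
      omega
    have hN'Bdeg : ∀ b ∈ B, (A.filter (fun a => b ∈ N' a)).card = d := by
      intro b hb
      obtain ⟨a0, ha0, hfa0⟩ := Finset.mem_image.mp (himg ▸ hb)
      have hset : A.filter (fun a => b ∈ N' a) = (A.filter (fun a => b ∈ N a)).erase a0 := by
        ext a
        simp only [Finset.mem_filter, Finset.mem_erase, hN', Finset.mem_erase]
        constructor
        · rintro ⟨haA, hbne, hbN⟩
          refine ⟨fun he => hbne ?_, haA, hbN⟩
          subst he; exact hfa0.symm
        · rintro ⟨hane, haA, hbN⟩
          refine ⟨haA, fun he => hane ?_, hbN⟩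
          exact hfinj haA ha0 (he ▸ hfa0.symm ▸ rfl)
      have hmem0 : a0 ∈ A.filter (fun a => b ∈ N a) :=
        Finset.mem_filter.mpr ⟨ha0, hfa0 ▸ hfmem a0 ha0⟩
      rw [hset, Finset.card_erase_of_mem hmem0, hB b hb]
      omega
    obtain ⟨c', hc1, hc2, hc3⟩ := ih N' hN'B hN'A hN'Bdeg
    refine ⟨fun a b => if a ∈ A ∧ b = f a then d else c' a b, ?_, ?_, ?_⟩
    · intro a ha b hb
      simp only []
      by_cases h : a ∈ A ∧ b = f a
      · rw [if_pos h]; omega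
      · rw [if_neg h]
        have hbN' : b ∈ N' a := by
          rw [hN']
          exact Finset.mem_erase.mpr ⟨fun he => h ⟨ha, he⟩, hb⟩
        exact lt_trans (hc1 a ha b hbN') (Nat.lt_succ_self d)
    · intro a ha b₁ hb₁ b₂ hb₂ heq
      simp only [] at heq
      by_cases h1 : a ∈ A ∧ b₁ = f a <;> by_cases h2 : a ∈ A ∧ b₂ = f a
      · exact h1.2.trans h2.2.symm
      · rw [if_pos h1, if_neg h2] at heq
        have : b₂ ∈ N' a := Finset.mem_erase.mpr ⟨fun he => h2 ⟨ha, he⟩, hb₂⟩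
        exact absurd heq.symm (Nat.ne_of_lt (hc1 a ha b₂ this))
      · rw [if_neg h1, if_pos h2] at heq
        have : b₁ ∈ N' a := Finset.mem_erase.mpr ⟨fun he => h1 ⟨ha, he⟩, hb₁⟩
        exact absurd heq (Nat.ne_of_lt (hc1 a ha b₁ this))
      · rw [if_neg h1, if_neg h2] at heq
        exact hc2 a ha b₁ (Finset.mem_erase.mpr ⟨fun he => h1 ⟨ha, he⟩, hb₁⟩)
          b₂ (Finset.mem_erase.mpr ⟨fun he => h2 ⟨ha, he⟩, hb₂⟩) heq
    · intro b hb a₁ ha₁ a₂ ha₂ hbN₁ hbN₂ heq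
      simp only [] at heq
      by_cases h1 : a₁ ∈ A ∧ b = f a₁ <;> by_cases h2 : a₂ ∈ A ∧ b = f a₂
      · exact hfinj ha₁ ha₂ (h1.2.symm.trans h2.2)
      · rw [if_pos h1, if_neg h2] at heq
        have : b ∈ N' a₂ := Finset.mem_erase.mpr ⟨fun he => h2 ⟨ha₂, he⟩, hbN₂⟩
        exact absurd heq.symm (Nat.ne_of_lt (hc1 a₂ ha₂ b this))
      · rw [if_neg h1, if_pos h2] at heq
        have : b ∈ N' a₁ := Finset.mem_erase.mpr ⟨fun he => h1 ⟨ha₁, he⟩, hbN₁⟩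
        exact absurd heq (Nat.ne_of_lt (hc1 a₁ ha₁ b this))
      · rw [if_neg h1, if_neg h2] at heq
        exact hc3 b hb a₁ ha₁ a₂ ha₂
          (Finset.mem_erase.mpr ⟨fun he => h1 ⟨ha₁, he⟩, hbN₁⟩)
          (Finset.mem_erase.mpr ⟨fun he => h2 ⟨ha₂, he⟩, hbN₂⟩) heq

/-- Arithmetic helper: a cell coordinate inside a block is `< k²`. -/
lemma sudoku_blt {k b y : ℕ} (hb : b < k) (hy : y < k) : b * k + y < k ^ 2 := by
  have h1 : b * k + y < (b + 1) * k := by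
    rw [add_mul, one_mul]; omega
  have h2 : (b + 1) * k ≤ k * k := Nat.mul_le_mul_right k hb
  rw [pow_two]
  omega

lemma sudoku_divk {k b y : ℕ} (hk : 0 < k) (hy : y < k) : (b * k + y) / k = b := by
  rw [mul_comm, Nat.mul_add_div hk, Nat.div_eq_of_lt hy, add_zero]

lemma sudoku_row_lt {k l bi x : ℕ} (hbi : bi < l) (hx : x < k) : bi * k + x < l * k := by
  have : (bi + 1) * k ≤ l * k := Nat.mul_le_mul_right k hbi
  rw [add_mul, one_mul] at this
  omega

/-- Each filled row of the rectangle contains every symbol. -/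
lemma sudoku_row_exists {k l : ℕ} {R : ℕ → ℕ → ℕ} (hR : IsSudokuRect k (l * k) R) :
    ∀ i < l * k, ∀ s ∈ Finset.Icc 1 (k ^ 2), ∃ j < k ^ 2, R i j = s := by
  intro i hi s hs
  have hinj : Set.InjOn (R i) (Finset.range (k ^ 2)) := by
    intro j₁ hj₁ j₂ hj₂ he
    exact hR.2.1 i hi j₁ (Finset.mem_range.mp hj₁) j₂ (Finset.mem_range.mp hj₂) he
  have himg : (Finset.range (k ^ 2)).image (R i) = Finset.Icc 1 (k ^ 2) := by
    apply Finset.eq_of_subset_of_card_le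
    · intro v hv
      obtain ⟨j, hj, rfl⟩ := Finset.mem_image.mp hv
      exact hR.1 i hi j (Finset.mem_range.mp hj)
    · rw [Finset.card_image_of_injOn hinj, Finset.card_range, Nat.card_Icc]
      omega
  rw [← himg] at hs
  obtain ⟨j, hj, hje⟩ := Finset.mem_image.mp hs
  exact ⟨j, Finset.mem_range.mp hj, hje⟩

/-- Each symbol occurs in every block of the filled part. -/
lemma sudoku_block_occ {k l : ℕ} {R : ℕ → ℕ → ℕ} (hR : IsSudokuRect k (l * k) R)
    (hk : 0 < k) :
    ∀ bi < l, ∀ bj < k, ∀ s ∈ Finset.Icc 1 (k ^ 2),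
      ∃ x < k, ∃ y < k, R (bi * k + x) (bj * k + y) = s := by
  intro bi hbi bj hbj s hs
  -- pick for each x < k, the column of s in row bi*k+x
  have hJ : ∀ x, ∃ j, x < k → (j < k ^ 2 ∧ R (bi * k + x) j = s) := by
    intro x
    by_cases hx : x < k
    · obtain ⟨j, hj, hje⟩ := sudoku_row_exists hR (bi * k + x) (sudoku_row_lt hbi hx) s hs
      exact ⟨j, fun _ => ⟨hj, hje⟩⟩
    · exact ⟨0, fun h => absurd h hx⟩
  choose J hJ' using hJ
  -- the map x ↦ (J x)/k is injective from range k to range k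
  have hmapsto : ∀ x ∈ Finset.range k, J x / k ∈ Finset.range k := by
    intro x hx
    rw [Finset.mem_range] at hx ⊢
    have := (hJ' x hx).1
    rw [Nat.div_lt_iff_lt_mul hk, ← pow_two]
    exact this
  have hinj : Set.InjOn (fun x => J x / k) (Finset.range k) := by
    intro x₁ hx₁ x₂ hx₂ he
    simp only [Finset.coe_range, Set.mem_Iio] at hx₁ hx₂
    simp only [] at he
    set b := J x₁ / k with hb
    have hbk : b < k := by
      have := (hJ' x₁ hx₁).1
      rw [hb, Nat.div_lt_iff_lt_mul hk, ← pow_two]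
      exact this
    have h1 : J x₁ = b * k + J x₁ % k := by
      rw [hb, mul_comm]; exact (Nat.div_add_mod _ _).symm
    have h2 : J x₂ = b * k + J x₂ % k := by
      rw [he, mul_comm]; exact (Nat.div_add_mod _ _).symm
    have := hR.2.2.2 bi b hbk x₁ hx₁ (J x₁ % k) (Nat.mod_lt _ hk) x₂ hx₂ (J x₂ % k)
      (Nat.mod_lt _ hk) (sudoku_row_lt hbi hx₁) (sudoku_row_lt hbi hx₂)
      (by rw [← h1, ← h2, (hJ' x₁ hx₁).2, (hJ' x₂ hx₂).2])
    exact this.1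
  have himg : (Finset.range k).image (fun x => J x / k) = Finset.range k := by
    apply Finset.eq_of_subset_of_card_le
    · intro b hb
      obtain ⟨x, hx, rfl⟩ := Finset.mem_image.mp hb
      exact hmapsto x hx
    · rw [Finset.card_image_of_injOn hinj]
  have hbj' : bj ∈ (Finset.range k).image (fun x => J x / k) := by
    rw [himg]; exact Finset.mem_range.mpr hbj
  obtain ⟨x, hx, hxe⟩ := Finset.mem_image.mp hbj'
  rw [Finset.mem_range] at hx
  refine ⟨x, hx, J x % k, Nat.mod_lt _ hk, ?_⟩
  have : J x = bj * k + J x % k := by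
    rw [← hxe, mul_comm]; exact (Nat.div_add_mod _ _).symm
  rw [← this]
  exact (hJ' x hx).2

/-- In each block column, each symbol occupies exactly `l` columns of the
filled part. -/
lemma sudoku_occ_cols_card {k l : ℕ} {R : ℕ → ℕ → ℕ} (hR : IsSudokuRect k (l * k) R)
    (hk : 0 < k) (hlk : l ≤ k) :
    ∀ s ∈ Finset.Icc 1 (k ^ 2), ∀ bj < k,
      ((Finset.Ico (bj * k) (bj * k + k)).filter
        (fun j => ∃ i < l * k, R i j = s)).card = l := by
  intro s hs bj hbj
  have hG : ∀ bi, ∃ p : ℕ × ℕ, bi < l →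
      (p.1 < k ∧ p.2 < k ∧ R (bi * k + p.1) (bj * k + p.2) = s) := by
    intro bi
    by_cases hbi : bi < l
    · obtain ⟨x, hx, y, hy, he⟩ := sudoku_block_occ hR hk bi hbi bj hbj s hs
      exact ⟨(x, y), fun _ => ⟨hx, hy, he⟩⟩
    · exact ⟨(0, 0), fun h => absurd h hbi⟩
  choose G hG' using hG
  set Gc : ℕ → ℕ := fun bi => bj * k + (G bi).2 with hGc
  have hset : (Finset.Ico (bj * k) (bj * k + k)).filter (fun j => ∃ i < l * k, R i j = s)
      = (Finset.range l).image Gc := by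
    ext j
    simp only [Finset.mem_filter, Finset.mem_image, Finset.mem_Ico, Finset.mem_range]
    constructor
    · rintro ⟨⟨hj1, hj2⟩, i, hi, hie⟩
      have hik : i / k < l := by
        rw [Nat.div_lt_iff_lt_mul hk]; exact hi
      refine ⟨i / k, hik, ?_⟩
      have hidecomp : i = (i / k) * k + i % k := by
        rw [mul_comm]; exact (Nat.div_add_mod _ _).symm
      have hjdecomp : j = bj * k + (j - bj * k) := by omega
      have hblk := hR.2.2.2 (i / k) bj hbj (G (i / k)).1 (hG' (i / k) hik).1
        (G (i / k)).2 (hG' (i / k) hik).2.1 (i % k) (Nat.mod_lt _ hk) (j - bj * k) (by omega)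
        (sudoku_row_lt hik (hG' (i / k) hik).1)
        (by rw [← hidecomp]; exact hi)
        (by rw [(hG' (i / k) hik).2.2, ← hjdecomp, ← hidecomp, hie])
      rw [hGc]
      simp only []
      omega
    · rintro ⟨bi, hbi, rfl⟩
      rw [hGc]
      simp only []
      refine ⟨⟨by omega, by have := (hG' bi hbi).2.1; omega⟩,
        bi * k + (G bi).1, sudoku_row_lt hbi (hG' bi hbi).1, (hG' bi hbi).2.2⟩
  rw [hset, Finset.card_image_of_injOn, Finset.card_range]
  intro b₁ hb₁ b₂ hb₂ he
  simp only [Finset.coe_range, Set.mem_Iio] at hb₁ hb₂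
  rw [hGc] at he
  simp only [] at he
  have hcol : R (b₁ * k + (G b₁).1) (bj * k + (G b₁).2)
      = R (b₂ * k + (G b₂).1) (bj * k + (G b₂).2) := by
    rw [(hG' b₁ hb₁).2.2, (hG' b₂ hb₂).2.2]
  rw [← he] at hcol
  have hieq := hR.2.2.1 (bj * k + (G b₁).2)
    (sudoku_blt hbj (hG' b₁ hb₁).2.1)
    (b₁ * k + (G b₁).1) (sudoku_row_lt hb₁ (hG' b₁ hb₁).1)
    (b₂ * k + (G b₂).1) (sudoku_row_lt hb₂ (hG' b₂ hb₂).1) hcol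
  have d1 : (b₁ * k + (G b₁).1) / k = b₁ := sudoku_divk hk (hG' b₁ hb₁).1
  have d2 : (b₂ * k + (G b₂).1) / k = b₂ := sudoku_divk hk (hG' b₂ hb₂).1
  rw [← d1, ← d2, hieq]

/-- In each block column, each symbol is missing from exactly `k − l` columns. -/
lemma sudoku_cols_card {k l : ℕ} {R : ℕ → ℕ → ℕ} (hR : IsSudokuRect k (l * k) R)
    (hk : 0 < k) (hlk : l ≤ k) :
    ∀ s ∈ Finset.Icc 1 (k ^ 2), ∀ bj < k,
      ((Finset.Ico (bj * k) (bj * k + k)).filter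
        (fun j => ∀ i < l * k, R i j ≠ s)).card = k - l := by
  intro s hs bj hbj
  have h1 := sudoku_occ_cols_card hR hk hlk s hs bj hbj
  have h2 := Finset.card_filter_add_card_filter_not
    (s := Finset.Ico (bj * k) (bj * k + k)) (p := fun j => ∃ i < l * k, R i j = s)
  have h3 : (Finset.Ico (bj * k) (bj * k + k)).filter
      (fun j => ¬ ∃ i < l * k, R i j = s)
      = (Finset.Ico (bj * k) (bj * k + k)).filter (fun j => ∀ i < l * k, R i j ≠ s) := by
    apply Finset.filter_congr
    intro j _
    push_neg
    rfl
  rw [h3, h1] at h2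
  have h4 : (Finset.Ico (bj * k) (bj * k + k)).card = k := by
    rw [Nat.card_Ico]; omega
  omega

/-- Each column misses exactly `k² − lk` symbols. -/
lemma sudoku_miss_card {k l : ℕ} {R : ℕ → ℕ → ℕ} (hR : IsSudokuRect k (l * k) R)
    (hlk : l ≤ k) :
    ∀ j < k ^ 2,
      ((Finset.Icc 1 (k ^ 2)).filter (fun s => ∀ i < l * k, R i j ≠ s)).card
        = k ^ 2 - l * k := by
  intro j hj
  have hinj : Set.InjOn (fun i => R i j) (Finset.range (l * k)) := by
    intro i₁ hi₁ i₂ hi₂ he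
    simp only [Finset.coe_range, Set.mem_Iio] at hi₁ hi₂
    exact hR.2.2.1 j hj i₁ hi₁ i₂ hi₂ he
  set img := (Finset.range (l * k)).image (fun i => R i j) with himg
  have hsub : img ⊆ Finset.Icc 1 (k ^ 2) := by
    intro v hv
    obtain ⟨i, hi, rfl⟩ := Finset.mem_image.mp hv
    exact hR.1 i (Finset.mem_range.mp hi) j hj
  have hcard : img.card = l * k := by
    rw [himg, Finset.card_image_of_injOn hinj, Finset.card_range]
  have hset : (Finset.Icc 1 (k ^ 2)).filter (fun s => ∀ i < l * k, R i j ≠ s)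
      = Finset.Icc 1 (k ^ 2) \ img := by
    ext s
    simp only [Finset.mem_filter, Finset.mem_sdiff, himg, Finset.mem_image, Finset.mem_range]
    constructor
    · rintro ⟨hsI, hmiss⟩
      exact ⟨hsI, fun ⟨i, hi, hie⟩ => hmiss i hi hie⟩
    · rintro ⟨hsI, hnot⟩
      exact ⟨hsI, fun i hi hie => hnot ⟨i, hi, hie⟩⟩
  rw [hset, Finset.card_sdiff_of_subset hsub, hcard, Nat.card_Icc]
  omega

/-- A Sudoku rectangle with `l` full block rows, `l < k`, extends by one more
full block row. -/
lemma sudoku_band {k l : ℕ} (hl : l < k) {R : ℕ → ℕ → ℕ}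
    (hR : IsSudokuRect k (l * k) R) :
    ∃ R' : ℕ → ℕ → ℕ, IsSudokuRect k ((l + 1) * k) R' ∧
      ∀ i < l * k, ∀ j < k ^ 2, R' i j = R i j := by
  have hk : 0 < k := by omega
  have hnkk : k ^ 2 = k * k := pow_two k
  set A := Finset.Icc 1 (k ^ 2) with hA
  have hAcard : A.card = k ^ 2 := by rw [hA, Nat.card_Icc]; omega
  have divIco : ∀ {b j : ℕ}, j ∈ Finset.Ico (b * k) (b * k + k) → j / k = b := by
    intro b j hj
    rw [Finset.mem_Ico] at hj
    have hdec : j = b * k + (j - b * k) := by omega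
    rw [hdec]
    exact sudoku_divk hk (by omega)
  -- Step 1: for each block column bj, match symbols to (column, slot) pairs.
  have Hmatch : ∀ bj, ∃ f : ℕ → ℕ × ℕ, bj < k →
      (Set.InjOn f A ∧ ∀ s ∈ A, f s ∈
        ((Finset.Ico (bj * k) (bj * k + k)).filter
          (fun j => ∀ i < l * k, R i j ≠ s)) ×ˢ Finset.range k) := by
    intro bj
    by_cases hbj : bj < k
    · have hres := sudoku_reg_matching A
        ((Finset.Ico (bj * k) (bj * k + k)) ×ˢ Finset.range k)
        (fun s => ((Finset.Ico (bj * k) (bj * k + k)).filter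
          (fun j => ∀ i < l * k, R i j ≠ s)) ×ˢ Finset.range k)
        ((k - l) * k)
        (Nat.mul_pos (by omega) hk)
        (fun s _ => Finset.product_subset_product (Finset.filter_subset _ _)
          (le_refl _))
        (fun s hs => by
          rw [Finset.card_product, Finset.card_range,
            sudoku_cols_card hR hk (le_of_lt hl) s hs bj hbj])
        (fun b hb => by
          rw [Finset.mem_product, Finset.mem_Ico] at hb
          have hbj1 : b.1 < k ^ 2 := by
            rw [hnkk]
            have : (bj + 1) * k ≤ k * k := Nat.mul_le_mul_right k hbj
            rw [add_mul, one_mul] at this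
            omega
          have hfe : A.filter (fun s => b ∈ ((Finset.Ico (bj * k) (bj * k + k)).filter
              (fun j => ∀ i < l * k, R i j ≠ s)) ×ˢ Finset.range k)
              = A.filter (fun s => ∀ i < l * k, R i b.1 ≠ s) := by
            apply Finset.filter_congr
            intro s _
            rw [Finset.mem_product, Finset.mem_filter, Finset.mem_Ico]
            constructor
            · rintro ⟨⟨_, h⟩, _⟩; exact h
            · intro h
              exact ⟨⟨⟨hb.1.1, hb.1.2⟩, h⟩, hb.2⟩
          rw [hfe, sudoku_miss_card hR (le_of_lt hl) b.1 hbj1]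
          have : l * k ≤ k * k := Nat.mul_le_mul_right k (le_of_lt hl)
          rw [hnkk, Nat.sub_mul])
      obtain ⟨f, hf1, hf2⟩ := hres
      exact ⟨f, fun _ => ⟨hf1, hf2⟩⟩
    · exact ⟨fun _ => (0, 0), fun h => absurd h hbj⟩
  choose F hF using Hmatch
  set col : ℕ → ℕ → ℕ := fun bj s => (F bj s).1 with hcoldef
  have colmem : ∀ bj, bj < k → ∀ s ∈ A, col bj s ∈ Finset.Ico (bj * k) (bj * k + k)
      ∧ ∀ i < l * k, R i (col bj s) ≠ s := by
    intro bj hbj s hs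
    have := (hF bj hbj).2 s hs
    rw [Finset.mem_product, Finset.mem_filter] at this
    exact ⟨this.1.1, this.1.2⟩
  -- Each column receives exactly k symbols
  have colcnt : ∀ bj, bj < k → ∀ j ∈ Finset.Ico (bj * k) (bj * k + k),
      (A.filter (fun s => col bj s = j)).card = k := by
    intro bj hbj
    apply sudoku_all_eq_of_sum (Finset.Ico (bj * k) (bj * k + k))
      (fun j => (A.filter (fun s => col bj s = j)).card) k
    · intro j hj
      have hle := Finset.card_le_card_of_injOn (F bj)
        (t := ({j} : Finset ℕ) ×ˢ Finset.range k)
        (s := A.filter (fun s => col bj s = j))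
        (by
          intro s hs
          rw [Finset.mem_coe, Finset.mem_filter] at hs
          rw [Finset.mem_coe, Finset.mem_product, Finset.mem_singleton]
          have := (hF bj hbj).2 s hs.1
          rw [Finset.mem_product] at this
          exact ⟨hs.2, this.2⟩)
        (by
          intro x hx y hy hxy
          rw [Finset.coe_filter] at hx hy
          exact (hF bj hbj).1 hx.1 hy.1 hxy)
      rw [Finset.card_product, Finset.card_singleton, Finset.card_range, one_mul] at hle
      exact hle
    · have hfib := Finset.card_eq_sum_card_fiberwise
        (s := A) (t := Finset.Ico (bj * k) (bj * k + k)) (f := fun s => col bj s)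
        (fun s hs => (colmem bj hbj s hs).1)
      rw [← hfib, hAcard, Nat.card_Ico, hnkk]
      have : bj * k + k - bj * k = k := by omega
      rw [this, Nat.mul_comm]
  -- Step 2: the k-regular symbol-column graph E
  set E : ℕ → Finset ℕ := fun s => (Finset.range k).image (fun bj => col bj s) with hE
  have Ediv : ∀ s ∈ A, ∀ bj, bj < k → (col bj s) / k = bj := by
    intro s hs bj hbj
    exact divIco (colmem bj hbj s hs).1
  have Emem : ∀ s ∈ A, ∀ j, j ∈ E s ↔ (j < k ^ 2 ∧ col (j / k) s = j) := by
    intro s hs j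
    rw [hE]
    simp only [Finset.mem_image, Finset.mem_range]
    constructor
    · rintro ⟨bj, hbj, rfl⟩
      have hIco := (colmem bj hbj s hs).1
      rw [Finset.mem_Ico] at hIco
      refine ⟨?_, by rw [Ediv s hs bj hbj]⟩
      rw [hnkk]
      have : (bj + 1) * k ≤ k * k := Nat.mul_le_mul_right k hbj
      rw [add_mul, one_mul] at this
      omega
    · rintro ⟨hjn, hje⟩
      exact ⟨j / k, by rw [Nat.div_lt_iff_lt_mul hk, ← hnkk]; exact hjn, hje⟩
  have EsubB : ∀ s ∈ A, E s ⊆ Finset.range (k ^ 2) := by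
    intro s hs j hj
    rw [Finset.mem_range]
    exact ((Emem s hs j).mp hj).1
  have Ecard : ∀ s ∈ A, (E s).card = k := by
    intro s hs
    rw [hE]
    rw [Finset.card_image_of_injOn, Finset.card_range]
    intro b₁ hb₁ b₂ hb₂ he
    simp only [Finset.coe_range, Set.mem_Iio] at hb₁ hb₂
    simp only [] at he
    rw [← Ediv s hs b₁ hb₁, ← Ediv s hs b₂ hb₂, he]
  have Edeg : ∀ j ∈ Finset.range (k ^ 2), (A.filter (fun s => j ∈ E s)).card = k := by
    intro j hj
    rw [Finset.mem_range] at hj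
    have hjk : j / k < k := by rw [Nat.div_lt_iff_lt_mul hk, ← hnkk]; exact hj
    have hfe : A.filter (fun s => j ∈ E s) = A.filter (fun s => col (j / k) s = j) := by
      apply Finset.filter_congr
      intro s hs
      rw [Emem s hs j]
      exact ⟨fun h => h.2, fun h => ⟨hj, h⟩⟩
    rw [hfe]
    apply colcnt (j / k) hjk
    rw [Finset.mem_Ico]
    have h1 := Nat.div_add_mod j k
    have h2 := Nat.mod_lt j hk
    have hmc : j / k * k = k * (j / k) := Nat.mul_comm _ _
    omega
  -- Edge colouring with k colours (= rows of the new band)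
  obtain ⟨c, hc1, hc2, hc3⟩ := sudoku_reg_decompose A (Finset.range (k ^ 2))
    (by rw [hAcard, Finset.card_range]) k E EsubB Ecard Edeg
  -- The new entries
  have hNewEx : ∀ x j, ∃ s, x < k → j < k ^ 2 →
      (s ∈ A ∧ j ∈ E s ∧ c s j = x) := by
    intro x j
    by_cases h : x < k ∧ j < k ^ 2
    · obtain ⟨hx, hj⟩ := h
      have hjB : j ∈ Finset.range (k ^ 2) := Finset.mem_range.mpr hj
      set Sj := A.filter (fun s => j ∈ E s) with hSj
      have hinj : Set.InjOn (fun s => c s j) Sj := by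
        intro s₁ hs₁ s₂ hs₂ he
        rw [hSj, Finset.coe_filter] at hs₁ hs₂
        exact hc3 j hjB s₁ hs₁.1 s₂ hs₂.1 hs₁.2 hs₂.2 he
      have himg : Sj.image (fun s => c s j) = Finset.range k := by
        apply Finset.eq_of_subset_of_card_le
        · intro v hv
          obtain ⟨s, hs, rfl⟩ := Finset.mem_image.mp hv
          rw [hSj, Finset.mem_filter] at hs
          exact Finset.mem_range.mpr (hc1 s hs.1 j hs.2)
        · rw [Finset.card_image_of_injOn hinj, Finset.card_range, hSj, Edeg j hjB]
      have hx' : x ∈ Sj.image (fun s => c s j) := by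
        rw [himg]; exact Finset.mem_range.mpr hx
      obtain ⟨s, hs, hse⟩ := Finset.mem_image.mp hx'
      rw [hSj, Finset.mem_filter] at hs
      exact ⟨s, fun _ _ => ⟨hs.1, hs.2, hse⟩⟩
    · exact ⟨0, fun hx hj => absurd ⟨hx, hj⟩ h⟩
  choose New hNew using hNewEx
  refine ⟨fun i j => if i < l * k then R i j else New (i - l * k) j, ?_, ?_⟩
  swap
  · intro i hi j _
    simp only [if_pos hi]
  have hm1 : (l + 1) * k = l * k + k := by rw [add_mul, one_mul]
  -- basic facts about New
  have newfact : ∀ x, x < k → ∀ j, j < k ^ 2 →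
      New x j ∈ A ∧ j ∈ E (New x j) ∧ c (New x j) j = x := by
    intro x hx j hj
    exact hNew x j hx hj
  have newfresh : ∀ x, x < k → ∀ j, j < k ^ 2 → ∀ i, i < l * k → R i j ≠ New x j := by
    intro x hx j hj i hi
    obtain ⟨hsA, hjE, _⟩ := newfact x hx j hj
    have hje := (Emem _ hsA j).mp hjE
    have hjk : j / k < k := by rw [Nat.div_lt_iff_lt_mul hk, ← hnkk]; exact hj
    have := (colmem (j / k) hjk _ hsA).2 i hi
    rw [hje.2] at this
    exact this
  refine ⟨?_, ?_, ?_, ?_⟩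
  · -- entries in range
    intro i hi j hj
    simp only []
    by_cases h : i < l * k
    · rw [if_pos h]; exact hR.1 i h j hj
    · rw [if_neg h]
      exact (newfact (i - l * k) (by omega) j hj).1
  · -- rows injective
    intro i hi j₁ hj₁ j₂ hj₂ he
    simp only [] at he
    by_cases h : i < l * k
    · rw [if_pos h, if_pos h] at he
      exact hR.2.1 i h j₁ hj₁ j₂ hj₂ he
    · rw [if_neg h, if_neg h] at he
      have hx : i - l * k < k := by omega
      obtain ⟨hsA, hjE₁, hcx₁⟩ := newfact (i - l * k) hx j₁ hj₁
      obtain ⟨_, hjE₂, hcx₂⟩ := newfact (i - l * k) hx j₂ hj₂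
      rw [← he] at hjE₂ hcx₂
      exact hc2 _ hsA j₁ hjE₁ j₂ hjE₂ (by rw [hcx₁, hcx₂])
  · -- columns injective
    intro j hj i₁ hi₁ i₂ hi₂ he
    simp only [] at he
    by_cases h1 : i₁ < l * k <;> by_cases h2 : i₂ < l * k
    · rw [if_pos h1, if_pos h2] at he
      exact hR.2.2.1 j hj i₁ h1 i₂ h2 he
    · rw [if_pos h1, if_neg h2] at he
      exact absurd he (newfresh (i₂ - l * k) (by omega) j hj i₁ h1)
    · rw [if_neg h1, if_pos h2] at he
      exact absurd he.symm (newfresh (i₁ - l * k) (by omega) j hj i₂ h2)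
    · rw [if_neg h1, if_neg h2] at he
      have hx₁ : i₁ - l * k < k := by omega
      have hx₂ : i₂ - l * k < k := by omega
      obtain ⟨hsA, hjE₁, hcx₁⟩ := newfact (i₁ - l * k) hx₁ j hj
      obtain ⟨_, hjE₂, hcx₂⟩ := newfact (i₂ - l * k) hx₂ j hj
      rw [he] at hcx₁
      rw [hcx₂] at hcx₁
      omega
  · -- blocks
    intro bi bj hbj x₁ hx₁ y₁ hy₁ x₂ hx₂ y₂ hy₂ hr₁ hr₂ he
    simp only [] at he
    have hbil : bi < l + 1 := by
      by_contra hcon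
      push_neg at hcon
      have : (l + 1) * k ≤ bi * k := Nat.mul_le_mul_right k hcon
      omega
    by_cases hbi : bi < l
    · have hlt₁ : bi * k + x₁ < l * k := sudoku_row_lt hbi hx₁
      have hlt₂ : bi * k + x₂ < l * k := sudoku_row_lt hbi hx₂
      rw [if_pos hlt₁, if_pos hlt₂] at he
      exact hR.2.2.2 bi bj hbj x₁ hx₁ y₁ hy₁ x₂ hx₂ y₂ hy₂ hlt₁ hlt₂ he
    · have hbieq : bi = l := by omega
      have hge₁ : ¬ (bi * k + x₁ < l * k) := by rw [hbieq]; omega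
      have hge₂ : ¬ (bi * k + x₂ < l * k) := by rw [hbieq]; omega
      rw [if_neg hge₁, if_neg hge₂] at he
      have hd₁ : bi * k + x₁ - l * k = x₁ := by rw [hbieq]; omega
      have hd₂ : bi * k + x₂ - l * k = x₂ := by rw [hbieq]; omega
      rw [hd₁, hd₂] at he
      have hj₁ : bj * k + y₁ < k ^ 2 := sudoku_blt hbj hy₁
      have hj₂ : bj * k + y₂ < k ^ 2 := sudoku_blt hbj hy₂
      obtain ⟨hsA, hjE₁, hcx₁⟩ := newfact x₁ hx₁ (bj * k + y₁) hj₁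
      obtain ⟨hsA₂, hjE₂, hcx₂⟩ := newfact x₂ hx₂ (bj * k + y₂) hj₂
      rw [he] at hjE₁ hcx₁ hsA
      -- the two columns lie in the same block, hence are equal
      have hdj₁ : (bj * k + y₁) / k = bj := sudoku_divk hk hy₁
      have hdj₂ : (bj * k + y₂) / k = bj := sudoku_divk hk hy₂
      have hcol₁ := ((Emem _ hsA₂ _).mp hjE₁).2
      have hcol₂ := ((Emem _ hsA₂ _).mp hjE₂).2
      rw [hdj₁] at hcol₁
      rw [hdj₂] at hcol₂
      have hyeq : y₁ = y₂ := by
        have : bj * k + y₁ = bj * k + y₂ := hcol₁.symm.trans hcol₂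
        omega
      subst hyeq
      refine ⟨?_, rfl⟩
      rw [hcx₂] at hcx₁
      omega

/-- A full rectangle is a Sudoku square. -/
lemma sudoku_square_of_full {k : ℕ} {R : ℕ → ℕ → ℕ} (hR : IsSudokuRect k (k * k) R) :
    IsSudokuSquare k R := by
  have hnkk : k ^ 2 = k * k := pow_two k
  obtain ⟨h1, h2, h3, h4⟩ := hR
  refine ⟨?_, ?_, ?_, ?_⟩
  · intro i hi j hj
    exact h1 i (by omega) j hj
  · intro i hi j₁ hj₁ j₂ hj₂
    exact h2 i (by omega) j₁ hj₁ j₂ hj₂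
  · intro j hj i₁ hi₁ i₂ hi₂
    exact h3 j hj i₁ (by omega) i₂ (by omega)
  · intro bi hbi bj hbj x₁ hx₁ y₁ hy₁ x₂ hx₂ y₂ hy₂
    have hr₁ : bi * k + x₁ < k * k := by
      have := sudoku_blt hbi hx₁; omega
    have hr₂ : bi * k + x₂ < k * k := by
      have := sudoku_blt hbi hx₂; omega
    exact h4 bi bj hbj x₁ hx₁ y₁ hy₁ x₂ hx₂ y₂ hy₂ hr₁ hr₂

theorem sudoku_rect_completable_of_full_blocks (k l : ℕ) (hl : l < k)
    (R : ℕ → ℕ → ℕ) (hR : IsSudokuRect k (l * k) R) :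
    ∃ S : ℕ → ℕ → ℕ, CompletesTo k (l * k) R S := by
  suffices H : ∀ t l', l' + t = k → ∀ R', IsSudokuRect k (l' * k) R' →
      ∃ S, CompletesTo k (l' * k) R' S by
    exact H (k - l) l (by omega) R hR
  intro t
  induction t with
  | zero =>
    intro l' hlk R' hR'
    have hle : l' = k := by omega
    subst hle
    exact ⟨R', sudoku_square_of_full hR', fun i _ j _ => rfl⟩
  | succ t ih =>
    intro l' hlk R' hR'
    obtain ⟨R'', hR'', hagree⟩ := sudoku_band (show l' < k by omega) hR'
    obtain ⟨S, hSq, hag⟩ := ih (l' + 1) (by omega) R'' hR''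
    refine ⟨S, hSq, fun i hi j hj => ?_⟩
    have hi' : i < (l' + 1) * k :=
      lt_of_lt_of_le hi (Nat.mul_le_mul_right k (Nat.le_succ l'))
    exact (hag i hi' j hj).trans (hagree i hi j hj)
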